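/- (Configuration C.) Let ŵ ∈ S_N, regarded as a bijection {1,…,N} → {1,…,n₁}×{1,…,n₂}. Suppose there are k ∈ {1,…,N−2}, i ∈ {1,…,n₁−1}, j ∈ {1,…,n₂−1} such that ŵ(k) = (i,j) and {ŵ(k+1), ŵ(k+2)} = {(i+1,j), (i,j+1)}. Let v ∈ W be determined by v⁻¹ = ((i i+1), (j j+1)) and let v̂ ∈ S_N be determined by v̂⁻¹ = ŵ·(k k+1 k+2)·ŵ₀, where (k k+1 k+2) is the 3-cycle sending k ↦ k+1 ↦ k+2 ↦ k. Then ŵ·Φ̂(((v̂ŵ)^∨)⁻¹) = {ε̂_{(i+1,j)} − ε̂_{(i,j)}, ε̂_{(i,j+1)} − ε̂_{(i,j)}}, Φ(v⁻¹) = {ε_{i+1} − ε_i, η_{j+1} − η_j}, and ρ restricts to a bijection from ŵ·Φ̂(((v̂ŵ)^∨)⁻¹) onto Φ(v⁻¹). -/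

import Mathlib

open Equiv

/-- The weight lattice `L = ℤ^{n₁} × ℤ^{n₂}` of `GL(n₁) × GL(n₂)`. -/
abbrev L (n₁ n₂ : ℕ) : Type := (Fin n₁ → ℤ) × (Fin n₂ → ℤ)

/-- The weight lattice `L̂ = ℤ^N` of `GL(N)`. -/
abbrev Lhat (N : ℕ) : Type := Fin N → ℤ

/-- The standard basis vector `ε_a` of the first factor of `L`. -/
def eps {n₁ n₂ : ℕ} (a : Fin n₁) : L n₁ n₂ := (Pi.single a 1, 0)

/-- The standard basis vector `η_c` of the second factor of `L`. -/
def eta {n₁ n₂ : ℕ} (c : Fin n₂) : L n₁ n₂ := (0, Pi.single c 1)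

/-- The standard basis vector `ε̂_p` of `L̂`. -/
def epsHat {N : ℕ} (p : Fin N) : Lhat N := Pi.single p 1

/-- The lexicographic identification of `{1,…,n₁} × {1,…,n₂}` with `{1,…,n₁n₂}`,
`(i,j) ↦ (i-1)n₂ + j` in 1-based terms. -/
def lex {n₁ n₂ : ℕ} (i : Fin n₁) (j : Fin n₂) : Fin (n₁ * n₂) :=
  finProdFinEquiv (i, j)

/-- The action of `W = S_{n₁} × S_{n₂}` on `L`, characterised by
`u • ε_a = ε_{u₁ a}` and `u • η_c = η_{u₂ c}`. -/
def wAct {n₁ n₂ : ℕ} (u : Perm (Fin n₁) × Perm (Fin n₂)) (x : L n₁ n₂) : L n₁ n₂ :=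
  (x.1 ∘ u.1.symm, x.2 ∘ u.2.symm)

/-- The action of `Ŵ = S_N` on `L̂`, characterised by `û • ε̂_p = ε̂_{û p}`. -/
def hatAct {N : ℕ} (u : Perm (Fin N)) (x : Lhat N) : Lhat N := x ∘ u.symm

/-- The positive roots `Φ⁺` of `GL(n₁) × GL(n₂)`. -/
def PhiPos (n₁ n₂ : ℕ) : Set (L n₁ n₂) :=
  {x | ∃ a b : Fin n₁, a < b ∧ x = eps a - eps b} ∪
    {x | ∃ c d : Fin n₂, c < d ∧ x = eta c - eta d}

/-- The negative roots `Φ⁻ = -Φ⁺`. -/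
def PhiNeg (n₁ n₂ : ℕ) : Set (L n₁ n₂) := Neg.neg '' PhiPos n₁ n₂

/-- The inversion set `Φ(u) = Φ⁻ ∩ u · Φ⁺`. -/
def Phi {n₁ n₂ : ℕ} (u : Perm (Fin n₁) × Perm (Fin n₂)) : Set (L n₁ n₂) :=
  PhiNeg n₁ n₂ ∩ wAct u '' PhiPos n₁ n₂

/-- The positive roots `Φ̂⁺` of `GL(N)`. -/
def PhiHatPos (N : ℕ) : Set (Lhat N) :=
  {x | ∃ p q : Fin N, p < q ∧ x = epsHat p - epsHat q}

/-- The negative roots `Φ̂⁻ = -Φ̂⁺`. -/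
def PhiHatNeg (N : ℕ) : Set (Lhat N) := Neg.neg '' PhiHatPos N

/-- The inversion set `Φ̂(û) = Φ̂⁻ ∩ û · Φ̂⁺`. -/
def PhiHat {N : ℕ} (u : Perm (Fin N)) : Set (Lhat N) :=
  PhiHatNeg N ∩ hatAct u '' PhiHatPos N

/-- The longest element `ŵ₀ : k ↦ N + 1 - k` of `S_N`. -/
def w0 (N : ℕ) : Perm (Fin N) := Fin.revPerm

/-- The 3-cycle `(a b c)` sending `a ↦ b ↦ c ↦ a` (permutations composed right-to-left). -/
def cyc {α : Type*} [DecidableEq α] (a b c : α) : Perm α :=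
  Equiv.swap a b * Equiv.swap b c


lemma single_sub_eq_single_sub {n : ℕ} {p q p' q' : Fin n} (hpq : p ≠ q)
    (h : (Pi.single p 1 : Fin n → ℤ) - Pi.single q 1 = Pi.single p' 1 - Pi.single q' 1) :
    p = p' ∧ q = q' := by
  have h1 := congrFun h p
  have h2 := congrFun h q
  simp only [Pi.sub_apply, Pi.single_apply, if_pos rfl, if_neg hpq, if_neg (Ne.symm hpq)] at h1 h2
  split_ifs at h1 h2 <;>
    first
      | exact ⟨by assumption, by assumption⟩
      | (exfalso; omega)

lemma single_sub_ne_zero {n : ℕ} {p q : Fin n} (hpq : p ≠ q) :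
    (Pi.single p 1 : Fin n → ℤ) - Pi.single q 1 ≠ 0 := by
  intro h
  have h1 := congrFun h p
  simp only [Pi.sub_apply, Pi.single_apply, if_pos rfl, if_neg hpq, Pi.zero_apply] at h1
  exact absurd h1 (by norm_num)

lemma hatAct_eps {N : ℕ} (u : Perm (Fin N)) (p q : Fin N) :
    hatAct u (epsHat p - epsHat q) = epsHat (u p) - epsHat (u q) := by
  funext x
  simp [hatAct, epsHat, Pi.single_apply, Equiv.symm_apply_eq]

lemma wAct_eps {n₁ n₂ : ℕ} (u : Perm (Fin n₁) × Perm (Fin n₂)) (a b : Fin n₁) :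
    wAct u (eps a - eps b) = (eps (u.1 a) - eps (u.1 b) : L n₁ n₂) := by
  refine Prod.ext ?_ ?_ <;> funext x <;>
    simp [wAct, eps, Pi.single_apply, Equiv.symm_apply_eq]

lemma wAct_eta {n₁ n₂ : ℕ} (u : Perm (Fin n₁) × Perm (Fin n₂)) (a b : Fin n₂) :
    wAct u (eta a - eta b) = (eta (u.2 a) - eta (u.2 b) : L n₁ n₂) := by
  refine Prod.ext ?_ ?_ <;> funext x <;>
    simp [wAct, eta, Pi.single_apply, Equiv.symm_apply_eq]

lemma eps_sub_ne_eta_sub {n₁ n₂ : ℕ} {a b : Fin n₁} {c d : Fin n₂} (hab : a ≠ b) :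
    (eps a - eps b : L n₁ n₂) ≠ eta c - eta d := by
  intro h
  have h1 := congrArg Prod.fst h
  simp only [eps, eta, Prod.fst_sub, sub_zero, sub_self] at h1
  exact single_sub_ne_zero hab h1

lemma cyc_apply {N : ℕ} {k k₁ k₂ : Fin N} (hk₁ : (k₁ : ℕ) = (k : ℕ) + 1)
    (hk₂ : (k₂ : ℕ) = (k : ℕ) + 2) (r : Fin N) :
    cyc k k₁ k₂ r = if r = k then k₁ else if r = k₁ then k₂ else if r = k₂ then k else r := by
  have h01 : k ≠ k₁ := by simp only [Fin.ne_iff_vne]; omega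
  have h02 : k ≠ k₂ := by simp only [Fin.ne_iff_vne]; omega
  have h12 : k₁ ≠ k₂ := by simp only [Fin.ne_iff_vne]; omega
  simp only [cyc, Equiv.Perm.mul_apply]
  rcases eq_or_ne r k with rfl | h1
  · rw [if_pos rfl, Equiv.swap_apply_of_ne_of_ne h01 h02, Equiv.swap_apply_left]
  · rw [if_neg h1]
    rcases eq_or_ne r k₁ with rfl | h2
    · rw [if_pos rfl, Equiv.swap_apply_left,
        Equiv.swap_apply_of_ne_of_ne (Ne.symm h02) (Ne.symm h12)]
    · rw [if_neg h2]
      rcases eq_or_ne r k₂ with rfl | h3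
      · rw [if_pos rfl, Equiv.swap_apply_right, Equiv.swap_apply_right]
      · rw [if_neg h3, Equiv.swap_apply_of_ne_of_ne h2 h3, Equiv.swap_apply_of_ne_of_ne h1 h2]

lemma cyc_inversions {N : ℕ} {k k₁ k₂ p q : Fin N} (hk₁ : (k₁ : ℕ) = (k : ℕ) + 1)
    (hk₂ : (k₂ : ℕ) = (k : ℕ) + 2) (hpq : p < q) (h : cyc k k₁ k₂ q < cyc k k₁ k₂ p) :
    (p = k ∧ q = k₂) ∨ (p = k₁ ∧ q = k₂) := by
  rw [cyc_apply hk₁ hk₂, cyc_apply hk₁ hk₂] at h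
  split_ifs at h <;>
    simp_all only [Fin.lt_def, Fin.ext_iff, Fin.ne_iff_vne, not_not, ne_eq] <;> first | omega | tauto

lemma swap_inversions {n : ℕ} {i i' p q : Fin n} (hi' : (i' : ℕ) = (i : ℕ) + 1)
    (hpq : p < q) (h : Equiv.swap i i' q < Equiv.swap i i' p) : p = i ∧ q = i' := by
  rw [Equiv.swap_apply_def, Equiv.swap_apply_def] at h
  split_ifs at h <;>
    simp_all only [Fin.lt_def, Fin.ext_iff, Fin.ne_iff_vne, not_not, ne_eq] <;> first | omega | tauto

lemma epsHat_sub_inj {N : ℕ} {p q p' q' : Fin N} (hpq : p ≠ q)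
    (h : epsHat p - epsHat q = epsHat p' - epsHat q') : p = p' ∧ q = q' :=
  single_sub_eq_single_sub hpq h


/-- Configuration C: `ŵ(k) = (i,j)` and `{ŵ(k+1), ŵ(k+2)} = {(i+1,j), (i,j+1)}`;
with `v⁻¹ = ((i i+1), (j j+1))` and `v̂⁻¹ = ŵ (k k+1 k+2) ŵ₀`, the sets are as indicated
and `ρ` restricts to a bijection between them. -/
theorem config_C (n₁ n₂ : ℕ) (hn₁ : 0 < n₁) (hn₂ : 0 < n₂)
    (ρ : Lhat (n₁ * n₂) →ₗ[ℤ] L n₁ n₂)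
    (hρ : ∀ (i : Fin n₁) (j : Fin n₂), ρ (epsHat (lex i j)) = eps i + eta j)
    (wh : Perm (Fin (n₁ * n₂)))
    (k k₁ k₂ : Fin (n₁ * n₂)) (hk₁ : (k₁ : ℕ) = (k : ℕ) + 1) (hk₂ : (k₂ : ℕ) = (k : ℕ) + 2)
    (i i' : Fin n₁) (hi' : (i' : ℕ) = (i : ℕ) + 1)
    (j j' : Fin n₂) (hj' : (j' : ℕ) = (j : ℕ) + 1)
    (hwk : wh k = lex i j)
    (hwk₁₂ : ({wh k₁, wh k₂} : Set (Fin (n₁ * n₂))) = {lex i' j, lex i j'})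
    (v : Perm (Fin n₁) × Perm (Fin n₂))
    (hv : v⁻¹ = (Equiv.swap i i', Equiv.swap j j'))
    (vh : Perm (Fin (n₁ * n₂)))
    (hvh : vh⁻¹ = wh * cyc k k₁ k₂ * w0 (n₁ * n₂)) :
    hatAct wh '' PhiHat ((w0 (n₁ * n₂) * (vh * wh))⁻¹) =
      {epsHat (lex i' j) - epsHat (lex i j), epsHat (lex i j') - epsHat (lex i j)} ∧
    Phi v⁻¹ = {(eps i' - eps i : L n₁ n₂), eta j' - eta j} ∧
    Set.BijOn (⇑ρ) (hatAct wh '' PhiHat ((w0 (n₁ * n₂) * (vh * wh))⁻¹)) (Phi v⁻¹) := by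
  have hkk₁ : k ≠ k₁ := by simp only [Fin.ne_iff_vne]; omega
  have hkk₂ : k ≠ k₂ := by simp only [Fin.ne_iff_vne]; omega
  have hk₁k₂ : k₁ ≠ k₂ := by simp only [Fin.ne_iff_vne]; omega
  have hklt₁ : k < k₁ := by simp only [Fin.lt_def]; omega
  have hklt₂ : k < k₂ := by simp only [Fin.lt_def]; omega
  have hk₁lt₂ : k₁ < k₂ := by simp only [Fin.lt_def]; omega
  have hii' : i' ≠ i := by simp only [Fin.ne_iff_vne]; omega
  have hilt : i < i' := by simp only [Fin.lt_def]; omega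
  have hjj' : j' ≠ j := by simp only [Fin.ne_iff_vne]; omega
  have hjlt : j < j' := by simp only [Fin.lt_def]; omega
  -- cyc values
  have c1 : cyc k k₁ k₂ k = k₁ := by rw [cyc_apply hk₁ hk₂]; simp
  have c2 : cyc k k₁ k₂ k₁ = k₂ := by rw [cyc_apply hk₁ hk₂]; simp [Ne.symm hkk₁]
  have c3 : cyc k k₁ k₂ k₂ = k := by
    rw [cyc_apply hk₁ hk₂]; simp [Ne.symm hkk₂, Ne.symm hk₁k₂]
  -- the conjugate is the 3-cycle
  have hconj : (w0 (n₁ * n₂) * (vh * wh))⁻¹ = cyc k k₁ k₂ := by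
    have hvh' : vh = (wh * cyc k k₁ k₂ * w0 (n₁ * n₂))⁻¹ := by rw [← hvh, inv_inv]
    rw [hvh']; group
  -- which element of the pair is which
  have hAB : lex i' j ≠ lex i j' := by
    intro h
    simp only [lex] at h
    have h2 := finProdFinEquiv.injective h
    rw [Prod.mk.injEq] at h2
    exact hii' h2.1
  have hcase : (wh k₁ = lex i' j ∧ wh k₂ = lex i j') ∨
      (wh k₁ = lex i j' ∧ wh k₂ = lex i' j) := by
    have h1 : wh k₁ ∈ ({lex i' j, lex i j'} : Set (Fin (n₁ * n₂))) := by
      rw [← hwk₁₂]; exact Set.mem_insert _ _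
    have h2 : wh k₂ ∈ ({lex i' j, lex i j'} : Set (Fin (n₁ * n₂))) := by
      rw [← hwk₁₂]; exact Set.mem_insert_of_mem _ rfl
    have hne : wh k₁ ≠ wh k₂ := fun h => hk₁k₂ (wh.injective h)
    simp only [Set.mem_insert_iff, Set.mem_singleton_iff] at h1 h2
    rcases h1 with h1 | h1 <;> rcases h2 with h2 | h2
    · exact absurd (h1.trans h2.symm) hne
    · exact Or.inl ⟨h1, h2⟩
    · exact Or.inr ⟨h1, h2⟩
    · exact absurd (h1.trans h2.symm) hne
  -- the hat inversion image in terms of wh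
  have hS : hatAct wh '' PhiHat (cyc k k₁ k₂) =
      {epsHat (wh k₁) - epsHat (wh k), epsHat (wh k₂) - epsHat (wh k)} := by
    ext x
    simp only [Set.mem_image, Set.mem_insert_iff, Set.mem_singleton_iff, PhiHat,
      Set.mem_inter_iff, PhiHatNeg, PhiHatPos, Set.mem_setOf_eq]
    constructor
    · rintro ⟨y, ⟨⟨z, ⟨a, b, hab, rfl⟩, hzy⟩, w, ⟨p2, q2, hpq, rfl⟩, hwy⟩, rfl⟩
      subst hzy
      rw [hatAct_eps, neg_sub] at hwy
      obtain ⟨hb, ha⟩ := epsHat_sub_inj hab.ne' hwy.symm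
      have hlt : cyc k k₁ k₂ q2 < cyc k k₁ k₂ p2 := ha ▸ hb ▸ hab
      rw [neg_sub]
      rcases cyc_inversions hk₁ hk₂ hpq hlt with ⟨rfl, rfl⟩ | ⟨rfl, rfl⟩
      · rw [c1] at hb; rw [c3] at ha
        subst hb; subst ha
        rw [hatAct_eps]
        exact Or.inl rfl
      · rw [c2] at hb; rw [c3] at ha
        subst hb; subst ha
        rw [hatAct_eps]
        exact Or.inr rfl
    · rintro (rfl | rfl)
      · exact ⟨epsHat k₁ - epsHat k,
          ⟨⟨epsHat k - epsHat k₁, ⟨k, k₁, hklt₁, rfl⟩, neg_sub _ _⟩,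
           ⟨epsHat k - epsHat k₂, ⟨k, k₂, hklt₂, rfl⟩, by rw [hatAct_eps, c1, c3]⟩⟩,
          by rw [hatAct_eps]⟩
      · exact ⟨epsHat k₂ - epsHat k,
          ⟨⟨epsHat k - epsHat k₂, ⟨k, k₂, hklt₂, rfl⟩, neg_sub _ _⟩,
           ⟨epsHat k₁ - epsHat k₂, ⟨k₁, k₂, hk₁lt₂, rfl⟩, by rw [hatAct_eps, c2, c3]⟩⟩,
          by rw [hatAct_eps]⟩
  have h1 : hatAct wh '' PhiHat ((w0 (n₁ * n₂) * (vh * wh))⁻¹) =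
      {epsHat (lex i' j) - epsHat (lex i j), epsHat (lex i j') - epsHat (lex i j)} := by
    rw [hconj, hS, hwk]
    rcases hcase with ⟨ha, hb⟩ | ⟨ha, hb⟩
    · rw [ha, hb]
    · rw [ha, hb]; exact Set.pair_comm _ _
  -- part 2
  have h2 : Phi v⁻¹ = {(eps i' - eps i : L n₁ n₂), eta j' - eta j} := by
    rw [hv]
    ext x
    simp only [Set.mem_insert_iff, Set.mem_singleton_iff, Phi, Set.mem_inter_iff, PhiNeg,
      PhiPos, Set.mem_image, Set.mem_union, Set.mem_setOf_eq]
    constructor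
    · rintro ⟨⟨z, hz, hzx⟩, w, hw, hwx⟩
      subst hzx
      rcases hz with ⟨a, b, hab, rfl⟩ | ⟨c, d, hcd, rfl⟩ <;>
        rcases hw with ⟨p, q, hpq, rfl⟩ | ⟨p, q, hpq, rfl⟩
      · rw [wAct_eps, neg_sub] at hwx
        obtain ⟨hb, ha⟩ := single_sub_eq_single_sub hab.ne'
          (congrArg Prod.fst hwx.symm)
        have hlt : Equiv.swap i i' q < Equiv.swap i i' p := ha ▸ hb ▸ hab
        obtain ⟨rfl, rfl⟩ := swap_inversions hi' hpq hlt
        rw [Equiv.swap_apply_left] at hb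
        rw [Equiv.swap_apply_right] at ha
        subst hb; subst ha
        rw [neg_sub]
        exact Or.inl rfl
      · rw [wAct_eta, neg_sub] at hwx
        exact absurd hwx.symm (eps_sub_ne_eta_sub hab.ne')
      · rw [wAct_eps, neg_sub] at hwx
        exact absurd hwx (eps_sub_ne_eta_sub
          ((Equiv.swap i i').injective.ne hpq.ne))
      · rw [wAct_eta, neg_sub] at hwx
        obtain ⟨hb, ha⟩ := single_sub_eq_single_sub hcd.ne'
          (congrArg Prod.snd hwx.symm)
        have hlt : Equiv.swap j j' q < Equiv.swap j j' p := ha ▸ hb ▸ hcd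
        obtain ⟨rfl, rfl⟩ := swap_inversions hj' hpq hlt
        rw [Equiv.swap_apply_left] at hb
        rw [Equiv.swap_apply_right] at ha
        subst hb; subst ha
        rw [neg_sub]
        exact Or.inr rfl
    · rintro (rfl | rfl)
      · refine ⟨⟨eps i - eps i', Or.inl ⟨i, i', hilt, rfl⟩, neg_sub _ _⟩,
          eps i - eps i', Or.inl ⟨i, i', hilt, rfl⟩, ?_⟩
        rw [wAct_eps]
        simp [Equiv.swap_apply_left, Equiv.swap_apply_right]
      · refine ⟨⟨eta j - eta j', Or.inr ⟨j, j', hjlt, rfl⟩, neg_sub _ _⟩,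
          eta j - eta j', Or.inr ⟨j, j', hjlt, rfl⟩, ?_⟩
        rw [wAct_eta]
        simp [Equiv.swap_apply_left, Equiv.swap_apply_right]
  -- rho computations
  have hρ1 : ρ (epsHat (lex i' j) - epsHat (lex i j)) = eps i' - eps i := by
    rw [map_sub, hρ, hρ]; abel
  have hρ2 : ρ (epsHat (lex i j') - epsHat (lex i j)) = eta j' - eta j := by
    rw [map_sub, hρ, hρ]; abel
  have hY : (eps i' - eps i : L n₁ n₂) ≠ eta j' - eta j := eps_sub_ne_eta_sub hii'
  refine ⟨h1, h2, ?_⟩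
  rw [h1, h2]
  refine ⟨?_, ?_, ?_⟩
  · rintro x hx
    simp only [Set.mem_insert_iff, Set.mem_singleton_iff] at hx ⊢
    rcases hx with rfl | rfl
    · exact Or.inl hρ1
    · exact Or.inr hρ2
  · rintro x hx y hy hxy
    simp only [Set.mem_insert_iff, Set.mem_singleton_iff] at hx hy
    rcases hx with rfl | rfl <;> rcases hy with rfl | rfl
    · rfl
    · rw [hρ1, hρ2] at hxy; exact absurd hxy hY
    · rw [hρ1, hρ2] at hxy; exact absurd hxy.symm hY
    · rfl
  · rintro y hy
    simp only [Set.mem_insert_iff, Set.mem_singleton_iff] at hy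
    rcases hy with rfl | rfl
    · exact ⟨_, Set.mem_insert _ _, hρ1⟩
    · exact ⟨_, Set.mem_insert_of_mem _ rfl, hρ2⟩
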